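/- Let X : ℝ → ℝ³ be a twice continuously differentiable curve, L := ‖X'‖ > 0, T := X'/L with first component T₁ satisfying T₁² < 1 everywhere, and let N₁ = (T₁·T − e₁)/√(1 − T₁²), N₂ = (e₁ × T)/√(1 − T₁²) be the interaction frame. Then the torsion-type coefficient of the frame satisfies (N₁'·N₂) = (T₁/√(1 − T₁²))·(T'·N₂) at every point; i.e., writing κ₂ and ω for the Frenet coefficients determined by T_q·N₂ and N₁_q·N₂, one has ω = κ₂·x₁ₛ/√(L² − x₁ₛ²) up to a common orientation sign, where x₁ₛ = L·T₁. -/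

import Mathlib

noncomputable def cross3 (a b : Fin 3 → ℝ) : Fin 3 → ℝ :=
  ![a 1 * b 2 - a 2 * b 1, a 2 * b 0 - a 0 * b 2, a 0 * b 1 - a 1 * b 0]

noncomputable def norm3 (a : Fin 3 → ℝ) : ℝ :=
  Real.sqrt ((a 0) ^ 2 + (a 1) ^ 2 + (a 2) ^ 2)

noncomputable def dot3 (a b : Fin 3 → ℝ) : ℝ :=
  a 0 * b 0 + a 1 * b 1 + a 2 * b 2

noncomputable def e1 : Fin 3 → ℝ := ![1, 0, 0]

/-- in the interaction frame, `N₁'·N₂ = (T₁/√(1 − T₁²))·(T'·N₂)`, i.e.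
the torsion-type coefficient satisfies `ω = κ₂·x₁ₛ/√(L² − x₁ₛ²)` up to a common
orientation sign. -/
theorem stmt19 (X : ℝ → Fin 3 → ℝ) (hX : ContDiff ℝ 2 X)
    (L : ℝ → ℝ) (hL : ∀ s, L s = norm3 (deriv X s)) (hLpos : ∀ s, 0 < L s)
    (T : ℝ → Fin 3 → ℝ) (hT : ∀ s, T s = (1 / L s) • deriv X s)
    (hT1 : ∀ s, (T s 0) ^ 2 < 1)
    (N₁ N₂ : ℝ → Fin 3 → ℝ)
    (hN₁ : ∀ s, N₁ s = (1 / Real.sqrt (1 - (T s 0) ^ 2)) • (T s 0 • T s - e1))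
    (hN₂ : ∀ s, N₂ s = (1 / Real.sqrt (1 - (T s 0) ^ 2)) • cross3 e1 (T s)) :
    ∀ s : ℝ,
      dot3 (deriv N₁ s) (N₂ s)
        = (T s 0 / Real.sqrt (1 - (T s 0) ^ 2)) * dot3 (deriv T s) (N₂ s) := by
  intro s
  have hD : Differentiable ℝ (deriv X) := by
    have h : ContDiff ℝ ((1:ℕ) + 1) X := by exact_mod_cast hX
    exact (contDiff_succ_iff_deriv.mp h).2.2.differentiable (by norm_num)
  set Q : ℝ → ℝ := fun t => (deriv X t 0) ^ 2 + (deriv X t 1) ^ 2 + (deriv X t 2) ^ 2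
    with hQdef
  have hQ : ∀ t, DifferentiableAt ℝ Q t := fun t => by
    have h0 := differentiableAt_pi.mp (hD t)
    exact (((h0 0).pow 2).add ((h0 1).pow 2)).add ((h0 2).pow 2)
  have hLQ : ∀ t, L t = Real.sqrt (Q t) := fun t => by rw [hL, norm3]
  have hQpos : ∀ t, 0 < Q t := fun t => Real.sqrt_pos.mp (hLQ t ▸ hLpos t)
  have hLdiff : ∀ t, DifferentiableAt ℝ L t := fun t => by
    have hfe : L = fun t => Real.sqrt (Q t) := funext hLQ
    rw [hfe]
    exact (hQ t).sqrt (ne_of_gt (hQpos t))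
  have hLne : ∀ t, L t ≠ 0 := fun t => ne_of_gt (hLpos t)
  have hTi : ∀ t i, T t i = deriv X t i / L t := fun t i => by
    rw [hT]
    simp [Pi.smul_apply, smul_eq_mul]
    ring
  have hTdiff : ∀ t i, DifferentiableAt ℝ (fun u => T u i) t := fun t i => by
    have hfe : (fun u => T u i) = fun u => deriv X u i / L u := funext fun u => hTi u i
    rw [hfe]
    exact (differentiableAt_pi.mp (hD t) i).div (hLdiff t) (hLne t)
  set w : ℝ → ℝ := fun t => Real.sqrt (1 - (T t 0) ^ 2) with hwdef
  have hwpos : ∀ t, 0 < w t := fun t => Real.sqrt_pos.mpr (by nlinarith [hT1 t])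
  have hwne : ∀ t, w t ≠ 0 := fun t => ne_of_gt (hwpos t)
  have hwdiff : ∀ t, DifferentiableAt ℝ w t := fun t =>
    DifferentiableAt.sqrt
      ((differentiableAt_const (1:ℝ)).sub ((hTdiff t 0).pow 2)) (by nlinarith [hT1 t])
  have hfdiff : DifferentiableAt ℝ (fun t => 1 / w t) s :=
    (differentiableAt_const (1:ℝ)).div (hwdiff s) (hwne s)
  set a : Fin 3 → ℝ := fun i => deriv (fun u => T u i) s with hadef
  have ha : ∀ i, HasDerivAt (fun u => T u i) (a i) s := fun i => (hTdiff s i).hasDerivAt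
  set f' : ℝ := deriv (fun t => 1 / w t) s with hfdef
  have hf' : HasDerivAt (fun t => 1 / w t) f' s := hfdiff.hasDerivAt
  have hN1i : ∀ t i, N₁ t i = (1 / w t) * (T t 0 * T t i - e1 i) := fun t i => by
    rw [hN₁]
    simp [Pi.smul_apply, Pi.sub_apply, smul_eq_mul]
    exact Or.inl rfl
  have hN1eq : N₁ = fun t i => (1 / w t) * (T t 0 * T t i - e1 i) :=
    funext fun t => funext fun i => hN1i t i
  have hcomp : ∀ i, HasDerivAt (fun t => (1 / w t) * (T t 0 * T t i - e1 i))
      (f' * (T s 0 * T s i - e1 i) + (1 / w s) * (a 0 * T s i + T s 0 * a i)) s :=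
    fun i => hf'.mul (((ha 0).mul (ha i)).sub_const (e1 i))
  have hN1deriv : deriv N₁ s =
      fun i => f' * (T s 0 * T s i - e1 i) + (1 / w s) * (a 0 * T s i + T s 0 * a i) := by
    rw [hN1eq]
    exact HasDerivAt.deriv (hasDerivAt_pi.mpr hcomp)
  have hTderiv : deriv T s = a := HasDerivAt.deriv (hasDerivAt_pi.mpr ha)
  have hc0 : cross3 e1 (T s) 0 = 0 := by simp [cross3, e1]
  have hc1 : cross3 e1 (T s) 1 = -(T s 2) := by simp [cross3, e1]
  have hc2 : cross3 e1 (T s) 2 = T s 1 := by simp [cross3, e1]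
  have hN2i : ∀ i, N₂ s i = (1 / w s) * cross3 e1 (T s) i := fun i => by
    rw [hN₂]
    simp [Pi.smul_apply, smul_eq_mul]
    exact Or.inl rfl
  have hws : Real.sqrt (1 - (T s 0) ^ 2) = w s := rfl
  have he10 : e1 0 = 1 := by simp [e1]
  have he11 : e1 1 = 0 := by simp [e1]
  have he12 : e1 2 = 0 := by simp [e1]
  rw [hN1deriv, hTderiv, hws]
  simp only [dot3, hN2i, hc0, hc1, hc2, he10, he11, he12]
  field_simp
  ring
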